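/- Let d, h₁,…,h_M ∈ ℂ, finite nonempty codebooks W₁,…,W_M ⊂ ℂ, and 1 ≤ M₀ ≤ M. For unit-modulus u, define s_m(u) = max_{w∈W_m} Re(conj(u)·h_m·w). Then max over subsets Γ of size M₀ and choices w_m ∈ W_m (m∈Γ) of |d + Σ_{m∈Γ} h_m w_m| equals max over unit-modulus u of [Re(conj(u)·d) + max_{|Γ|=M₀} Σ_{m∈Γ} s_m(u)]. -/

import Mathlib

private lemma exists_unit_polar (z : ℂ) :
    ∃ u : ℂ, ‖u‖ = 1 ∧ (starRingEnd ℂ) u * z = (‖z‖ : ℂ) := by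
  by_cases hz : z = 0
  · exact ⟨1, by simp [hz]⟩
  · have habs : (‖z‖ : ℂ) ≠ 0 := by exact_mod_cast (norm_ne_zero_iff.mpr hz)
    refine ⟨z / (‖z‖ : ℂ), ?_, ?_⟩
    · have : ‖z‖ ≠ 0 := (norm_ne_zero_iff.mpr hz)
      simp [norm_div, map_div₀, Complex.norm_real, abs_of_nonneg (norm_nonneg z), div_self this]
    · rw [map_div₀, Complex.conj_ofReal, div_mul_eq_mul_div, mul_comm, Complex.mul_conj]
      rw [div_eq_iff habs]
      norm_cast
      rw [Complex.normSq_eq_norm_sq]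
      ring

theorem stmt_13 (M M₀ : ℕ) (hM₀ : 1 ≤ M₀) (hMM : M₀ ≤ M)
    (d : ℂ) (h : Fin M → ℂ) (W : Fin M → Finset ℂ) (hW : ∀ m, (W m).Nonempty) :
    sSup {r : ℝ | ∃ Γ : Finset (Fin M), Γ.card = M₀ ∧
        ∃ w : Fin M → ℂ, (∀ m ∈ Γ, w m ∈ W m) ∧
          r = ‖d + ∑ m ∈ Γ, h m * w m‖} =
      sSup {r : ℝ | ∃ u : ℂ, ‖u‖ = 1 ∧
        r = ((starRingEnd ℂ) u * d).re +
          sSup {t : ℝ | ∃ Γ : Finset (Fin M), Γ.card = M₀ ∧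
            t = ∑ m ∈ Γ,
              (W m).sup' (hW m) (fun w => ((starRingEnd ℂ) u * (h m * w)).re)}} := by
  classical
  -- notation
  set A : Set ℝ := {r : ℝ | ∃ Γ : Finset (Fin M), Γ.card = M₀ ∧
        ∃ w : Fin M → ℂ, (∀ m ∈ Γ, w m ∈ W m) ∧
          r = ‖d + ∑ m ∈ Γ, h m * w m‖} with hA
  set g : ℂ → Fin M → ℝ := fun u m =>
      (W m).sup' (hW m) (fun w => ((starRingEnd ℂ) u * (h m * w)).re) with hg
  set T : ℂ → Set ℝ := fun u => {t : ℝ | ∃ Γ : Finset (Fin M), Γ.card = M₀ ∧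
            t = ∑ m ∈ Γ, g u m} with hT
  set B : Set ℝ := {r : ℝ | ∃ u : ℂ, ‖u‖ = 1 ∧
        r = ((starRingEnd ℂ) u * d).re + sSup (T u)} with hB
  -- a set of cardinality M₀ exists
  obtain ⟨Γ₁, -, hΓ₁⟩ := Finset.exists_subset_card_eq (s := (Finset.univ : Finset (Fin M))) (n := M₀)
    (by simpa using hMM)
  -- finiteness of T u
  have hTfin : ∀ u : ℂ, (T u).Finite := by
    intro u
    have : T u ⊆ ↑(((Finset.univ : Finset (Finset (Fin M))).image
        (fun Γ => ∑ m ∈ Γ, g u m))) := by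
      rintro t ⟨Γ, hΓ, rfl⟩
      simp
    exact Set.Finite.subset (Finset.finite_toSet _) this
  have hTne : ∀ u : ℂ, (T u).Nonempty := fun u => ⟨_, Γ₁, hΓ₁, rfl⟩
  -- bound on g
  have hgle : ∀ u : ℂ, ‖u‖ = 1 → ∀ m,
      g u m ≤ (W m).sup' (hW m) (fun w => ‖h m * w‖) := by
    intro u hu m
    apply Finset.sup'_le
    intro w hw
    refine le_trans (Complex.re_le_norm _) ?_
    rw [norm_mul]
    have : ‖(starRingEnd ℂ) u‖ = 1 := by simpa using hu
    rw [this, one_mul]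
    exact Finset.le_sup' (fun w => ‖h m * w‖) hw
  have hsupabs_nonneg : ∀ m, 0 ≤ (W m).sup' (hW m) (fun w => ‖h m * w‖) := by
    intro m
    obtain ⟨w, hw⟩ := hW m
    exact le_trans (norm_nonneg _)
      (Finset.le_sup' (fun w => ‖h m * w‖) hw)
  set C : ℝ := ‖d‖ + ∑ m, (W m).sup' (hW m) (fun w => ‖h m * w‖) with hC
  -- A bounded by C
  have hAbdd : ∀ r ∈ A, r ≤ C := by
    rintro r ⟨Γ, hΓ, w, hwm, rfl⟩
    refine le_trans (norm_add_le _ _) (add_le_add le_rfl ?_)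
    calc ‖∑ m ∈ Γ, h m * w m‖
        ≤ ∑ m ∈ Γ, ‖h m * w m‖ := norm_sum_le _ _
      _ ≤ ∑ m ∈ Γ, (W m).sup' (hW m) (fun w => ‖h m * w‖) :=
          Finset.sum_le_sum fun m hm =>
            Finset.le_sup' (fun w => ‖h m * w‖) (hwm m hm)
      _ ≤ ∑ m, (W m).sup' (hW m) (fun w => ‖h m * w‖) :=
          Finset.sum_le_sum_of_subset_of_nonneg (Finset.subset_univ _)
            (fun m _ _ => hsupabs_nonneg m)
  have hAne : A.Nonempty := by
    refine ⟨_, Γ₁, hΓ₁, fun m => (hW m).choose, fun m _ => (hW m).choose_spec, rfl⟩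
  have hAbddAbove : BddAbove A := ⟨C, hAbdd⟩
  -- T u bounded, sSup T u attained
  have hTsup : ∀ u : ℂ, sSup (T u) ∈ T u := fun u => (hTne u).csSup_mem (hTfin u)
  have hTbddAbove : ∀ u : ℂ, BddAbove (T u) := fun u => (hTfin u).bddAbove
  -- B bounded by C
  have hBbdd : ∀ r ∈ B, r ≤ C := by
    rintro r ⟨u, hu, rfl⟩
    have h1 : ((starRingEnd ℂ) u * d).re ≤ ‖d‖ := by
      refine le_trans (Complex.re_le_norm _) ?_
      rw [norm_mul]
      have : ‖(starRingEnd ℂ) u‖ = 1 := by simpa using hu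
      rw [this, one_mul]
    obtain ⟨Γ, hΓ, hEq⟩ := hTsup u
    have h2 : sSup (T u) ≤ ∑ m, (W m).sup' (hW m) (fun w => ‖h m * w‖) := by
      rw [hEq]
      calc ∑ m ∈ Γ, g u m
          ≤ ∑ m ∈ Γ, (W m).sup' (hW m) (fun w => ‖h m * w‖) :=
            Finset.sum_le_sum fun m _ => hgle u hu m
        _ ≤ _ := Finset.sum_le_sum_of_subset_of_nonneg (Finset.subset_univ _)
            (fun m _ _ => hsupabs_nonneg m)
    exact add_le_add h1 h2
  have hBne : B.Nonempty := ⟨_, 1, by simp, rfl⟩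
  have hBbddAbove : BddAbove B := ⟨C, hBbdd⟩
  apply le_antisymm
  · -- sSup A ≤ sSup B
    refine csSup_le hAne ?_
    rintro r ⟨Γ, hΓ, w, hwm, rfl⟩
    set z : ℂ := d + ∑ m ∈ Γ, h m * w m with hz
    obtain ⟨u, hu, hpolar⟩ := exists_unit_polar z
    have key : ‖z‖ = ((starRingEnd ℂ) u * d).re
        + ∑ m ∈ Γ, ((starRingEnd ℂ) u * (h m * w m)).re := by
      have : (starRingEnd ℂ) u * z
          = (starRingEnd ℂ) u * d + ∑ m ∈ Γ, (starRingEnd ℂ) u * (h m * w m) := by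
        rw [hz, mul_add, Finset.mul_sum]
      have hre : ((starRingEnd ℂ) u * z).re = ‖z‖ := by
        rw [hpolar]; simp
      rw [← hre, this]
      simp [Complex.add_re, Complex.re_sum]
    rw [key]
    have hstep : ∑ m ∈ Γ, ((starRingEnd ℂ) u * (h m * w m)).re ≤ sSup (T u) := by
      refine le_trans ?_ (le_csSup (hTbddAbove u) ⟨Γ, hΓ, rfl⟩)
      refine Finset.sum_le_sum fun m hm => ?_
      simp only [hg]
      exact Finset.le_sup' (fun w => ((starRingEnd ℂ) u * (h m * w)).re) (hwm m hm)
    refine le_trans (add_le_add le_rfl hstep) ?_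
    exact le_csSup hBbddAbove ⟨u, hu, rfl⟩
  · -- sSup B ≤ sSup A
    refine csSup_le hBne ?_
    rintro r ⟨u, hu, rfl⟩
    obtain ⟨Γ, hΓ, hEq⟩ := hTsup u
    -- choose maximizers w m
    have hchoice : ∀ m : Fin M, ∃ w ∈ W m, g u m = ((starRingEnd ℂ) u * (h m * w)).re := by
      intro m
      obtain ⟨w, hw, hwe⟩ := Finset.exists_mem_eq_sup' (hW m)
        (fun w => ((starRingEnd ℂ) u * (h m * w)).re)
      exact ⟨w, hw, hwe⟩
    choose w hwmem hwe using hchoice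
    have key : ((starRingEnd ℂ) u * d).re + sSup (T u)
        = ((starRingEnd ℂ) u * (d + ∑ m ∈ Γ, h m * w m)).re := by
      rw [hEq, mul_add, Finset.mul_sum]
      simp only [Complex.add_re, Complex.re_sum]
      congr 1
      exact Finset.sum_congr rfl fun m _ => hwe m
    rw [key]
    refine le_trans (Complex.re_le_norm _) ?_
    rw [norm_mul]
    have : ‖(starRingEnd ℂ) u‖ = 1 := by simpa using hu
    rw [this, one_mul]
    exact le_csSup hAbddAbove ⟨Γ, hΓ, w, fun m _ => hwmem m, rfl⟩
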